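/- For any ideal J of ℤ[σ] (polynomial ring over ℤ in one variable) there exists a principal ideal J' containing J such that J'/J is finite. -/

import Mathlib

open Polynomial Ideal

-- helper: finite from submodule and quotient
lemma finite_of_sub_quot {R M : Type*} [Ring R] [AddCommGroup M] [Module R M]
    (S : Submodule R M) (h1 : Finite S) (h2 : Finite (M ⧸ S)) : Finite M := by
  classical
  have hs := Submodule.Quotient.mk_surjective S
  set σ := Function.surjInv hs with hσ
  refine Finite.of_surjective (fun q : (M ⧸ S) × S => σ q.1 + (q.2 : M)) ?_
  intro x
  have hx : x - σ (Submodule.Quotient.mk x) ∈ S := by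
    rw [← Submodule.Quotient.mk_eq_zero, Submodule.Quotient.mk_sub]
    rw [Function.surjInv_eq hs]
    simp
  exact ⟨⟨Submodule.Quotient.mk x, ⟨_, hx⟩⟩, by simp⟩

lemma finite_combine {R : Type*} [CommRing R] (I : Ideal R) (a b : R) (hab : a * b ∈ I)
    (ha : Finite (R ⧸ (I ⊔ Ideal.span {a}))) (hb : Finite (R ⧸ (I ⊔ Ideal.span {b}))) :
    Finite (R ⧸ I) := by
  set T : R →ₗ[R] (R ⧸ I) := I.mkQ.comp (LinearMap.mulLeft R a) with hT
  have hTx : ∀ x, T x = Submodule.Quotient.mk (a * x) := fun x => rfl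
  set S : Submodule R (R ⧸ I) := LinearMap.range T with hS
  have hker : I ⊔ Ideal.span {b} ≤ LinearMap.ker T.rangeRestrict := by
    rw [LinearMap.ker_rangeRestrict]
    refine sup_le (fun x hx => ?_) ?_
    · show T x = 0
      rw [hTx, Submodule.Quotient.mk_eq_zero]
      exact I.mul_mem_left a hx
    · rw [Ideal.span_le, Set.singleton_subset_iff]
      show T b = 0
      rw [hTx, Submodule.Quotient.mk_eq_zero]
      exact hab
  have hfinS : Finite S := by
    refine Finite.of_surjective (Submodule.liftQ _ T.rangeRestrict hker) ?_
    have h1 : Function.Surjective T.rangeRestrict := T.surjective_rangeRestrict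
    intro y
    obtain ⟨x, rfl⟩ := h1 y
    exact ⟨Submodule.Quotient.mk x, rfl⟩
  have hfinQ : Finite ((R ⧸ I) ⧸ S) := by
    set ψ : R →ₗ[R] (R ⧸ I) ⧸ S := S.mkQ.comp I.mkQ with hψ
    have hker2 : I ⊔ Ideal.span {a} ≤ LinearMap.ker ψ := by
      refine sup_le (fun x hx => ?_) ?_
      · show S.mkQ (I.mkQ x) = 0
        have : I.mkQ x = 0 := by
          rw [Submodule.mkQ_apply, Submodule.Quotient.mk_eq_zero]; exact hx
        rw [this, map_zero]
      · rw [Ideal.span_le, Set.singleton_subset_iff]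
        show S.mkQ (I.mkQ a) = 0
        rw [Submodule.mkQ_apply, Submodule.Quotient.mk_eq_zero]
        exact ⟨1, by rw [hTx, mul_one]; rfl⟩
    refine Finite.of_surjective (Submodule.liftQ _ ψ hker2) ?_
    intro y
    obtain ⟨x, rfl⟩ := Submodule.Quotient.mk_surjective _ y
    obtain ⟨z, rfl⟩ := Submodule.Quotient.mk_surjective _ x
    exact ⟨Submodule.Quotient.mk z, rfl⟩
  exact finite_of_sub_quot S hfinS hfinQ

lemma finite_quot_field {K : Type*} [Field K] [Finite K] (g : K[X]) (hg : g ≠ 0) :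
    Finite (K[X] ⧸ Ideal.span {g}) := by
  have pb := AdjoinRoot.powerBasis hg
  have : Finite (AdjoinRoot g) := by
    haveI : Fintype K := Fintype.ofFinite K
    exact Finite.of_equiv _ pb.basis.equivFun.symm.toEquiv
  exact this

lemma finite_quot_modp (p : ℕ) (hp : p.Prime) (I : Ideal (Polynomial ℤ)) (f : Polynomial ℤ)
    (hf : f ∈ I) (hnd : ¬ (C (p : ℤ) ∣ f)) :
    Finite (Polynomial ℤ ⧸ (I ⊔ Ideal.span {C (p : ℤ)})) := by
  haveI : Fact p.Prime := ⟨hp⟩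
  haveI : NeZero p := ⟨hp.pos.ne'⟩
  set Φ : Polynomial ℤ →+* Polynomial (ZMod p) := mapRingHom (Int.castRingHom (ZMod p)) with hΦ
  have hsurj : Function.Surjective Φ :=
    Polynomial.map_surjective _ (ZMod.intCast_surjective)
  have hker : RingHom.ker Φ = Ideal.span {C (p : ℤ)} := by
    ext x
    rw [RingHom.mem_ker, Ideal.mem_span_singleton]
    constructor
    · intro h
      rw [C_dvd_iff_dvd_coeff]
      intro i
      have := congrArg (fun q => Polynomial.coeff q i) h
      simp only [hΦ, coe_mapRingHom, coeff_map, coeff_zero] at this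
      rwa [eq_intCast, ZMod.intCast_zmod_eq_zero_iff_dvd] at this
    · intro h
      rw [C_dvd_iff_dvd_coeff] at h
      ext i
      simp only [hΦ, coe_mapRingHom, coeff_map, coeff_zero, eq_intCast]
      rw [ZMod.intCast_zmod_eq_zero_iff_dvd]
      exact h i
  -- iso from quotient by span{C p}
  set e1 : (Polynomial ℤ ⧸ Ideal.span {C (p : ℤ)}) ≃+* Polynomial (ZMod p) :=
    (Ideal.quotEquivOfEq hker.symm).trans (RingHom.quotientKerEquivOfSurjective hsurj) with hE
  have he1 : ∀ x, e1 (Ideal.Quotient.mk _ x) = Φ x := fun x => by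
    rw [hE, RingEquiv.trans_apply, Ideal.quotEquivOfEq_mk,
      RingHom.quotientKerEquivOfSurjective, RingHom.quotientKerEquivOfRightInverse.apply,
      RingHom.kerLift_mk]
  -- Φ f ≠ 0
  have hΦf : Φ f ≠ 0 := by
    intro h0
    exact hnd (Ideal.mem_span_singleton.mp (hker ▸ RingHom.mem_ker.mpr h0))
  -- the target ideal in (ZMod p)[X]
  set A : Ideal (Polynomial (ZMod p)) :=
    (I.map (Ideal.Quotient.mk (Ideal.span {C (p : ℤ)}))).map (e1 : _ →+* _) with hA
  have hmemA : Φ f ∈ A := by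
    rw [hA, ← he1]
    exact Ideal.mem_map_of_mem _ (Ideal.mem_map_of_mem _ hf)
  have hbase : Finite (Polynomial (ZMod p) ⧸ Ideal.span {Φ f}) := finite_quot_field _ hΦf
  have hAfin : Finite (Polynomial (ZMod p) ⧸ A) := by
    have hle : Ideal.span {Φ f} ≤ A := by
      rw [Ideal.span_le, Set.singleton_subset_iff]; exact hmemA
    refine Finite.of_surjective (Ideal.Quotient.factor hle) ?_
    intro y
    obtain ⟨x, rfl⟩ := Ideal.Quotient.mk_surjective y
    exact ⟨Ideal.Quotient.mk _ x, Ideal.Quotient.factor_mk hle x⟩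
  have hBfin : Finite ((Polynomial ℤ ⧸ Ideal.span {C (p : ℤ)}) ⧸
      I.map (Ideal.Quotient.mk (Ideal.span {C (p : ℤ)}))) :=
    Finite.of_equiv _ (Ideal.quotientEquiv _ A e1 rfl).symm.toEquiv
  have := Finite.of_equiv _ (DoubleQuot.quotQuotEquivQuotSup (Ideal.span {C (p : ℤ)}) I).toEquiv
  rw [sup_comm]
  exact this

lemma finite_quot_of_int_mem :
    ∀ (N : ℕ) (n : ℤ) (I : Ideal (Polynomial ℤ)), n.natAbs = N → n ≠ 0 →
    (C n ∈ I) → (∀ p : Polynomial ℤ, Prime p → ¬ I ≤ Ideal.span {p}) →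
    Finite (Polynomial ℤ ⧸ I) := by
  intro N
  induction N using Nat.strong_induction_on with
  | _ N IH =>
    intro n I hN hn hC hP
    by_cases hu : IsUnit n
    · have hI : I = ⊤ := Ideal.eq_top_of_isUnit_mem I hC (isUnit_C.mpr hu)
      have : Subsingleton (Polynomial ℤ ⧸ I) := by
        rw [hI]
        infer_instance
      exact Finite.of_subsingleton
    · -- n has a prime factor p
      have hna : n.natAbs ≠ 1 := fun h => hu (Int.isUnit_iff_natAbs_eq.mpr h)
      obtain ⟨p, hp, hpd⟩ := Nat.exists_prime_and_dvd hna
      have hpn : (p : ℤ) ∣ n := by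
        have : (p:ℤ) ∣ (n.natAbs : ℤ) := Int.natCast_dvd_natCast.mpr hpd
        exact this.trans (Int.natAbs_dvd.mpr dvd_rfl)
      obtain ⟨m, hm⟩ := hpn
      have hm0 : m ≠ 0 := by rintro rfl; simp at hm; exact hn hm
      have hlt : m.natAbs < N := by
        rw [← hN, hm, Int.natAbs_mul, Int.natAbs_natCast]
        have h1 : 1 ≤ m.natAbs := Nat.one_le_iff_ne_zero.mpr (Int.natAbs_ne_zero.mpr hm0)
        calc m.natAbs = 1 * m.natAbs := (one_mul _).symm
        _ < p * m.natAbs := by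
          exact (Nat.mul_lt_mul_right (Nat.lt_of_lt_of_le Nat.zero_lt_one h1)).mpr hp.one_lt
      -- quotient by I ⊔ (C p) is finite
      have hCp : Prime (C (p : ℤ)) := Polynomial.prime_C_iff.mpr ((Int.prime_iff_natAbs_prime.mpr (by simpa using hp)))
      have hnle := hP _ hCp
      rw [SetLike.not_le_iff_exists] at hnle
      obtain ⟨f, hfI, hfn⟩ := hnle
      have hfin1 : Finite (Polynomial ℤ ⧸ (I ⊔ Ideal.span {C (p : ℤ)})) :=
        finite_quot_modp p hp I f hfI (fun h => hfn (Ideal.mem_span_singleton.mpr h))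
      -- quotient by I ⊔ (C m) is finite by IH
      have hfin2 : Finite (Polynomial ℤ ⧸ (I ⊔ Ideal.span {C m})) := by
        refine IH m.natAbs hlt m _ rfl hm0 ?_ ?_
        · exact Ideal.mem_sup_right (Ideal.subset_span rfl)
        · intro q hq hle
          exact hP q hq (le_trans le_sup_left hle)
      exact finite_combine I (C (p:ℤ)) (C m) (by rw [← C_mul, ← hm]; exact hC) hfin1 hfin2

noncomputable def φQ : Polynomial ℤ →+* Polynomial ℚ := mapRingHom (Int.castRingHom ℚ)

lemma phiQ_inj : Function.Injective φQ :=
  Polynomial.map_injective _ (fun a b h => by simpa using h)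

lemma int_normalize (A : Polynomial ℚ) :
    ∃ (c : ℤ) (a : Polynomial ℤ), c ≠ 0 ∧ φQ a = C (c : ℚ) * A := by
  obtain ⟨⟨c, hc⟩, hmap⟩ := IsLocalization.integerNormalization_map_to_map (nonZeroDivisors ℤ) A
  refine ⟨c, IsLocalization.integerNormalization (nonZeroDivisors ℤ) A,
    mem_nonZeroDivisors_iff_ne_zero.mp hc, ?_⟩
  have : (c : ℤ) • A = C (c : ℚ) * A := by
    rw [← smul_eq_C_mul, ← algebraMap_smul ℚ (c : ℤ) A]
    norm_num
  rw [← this, ← hmap]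
  simp [φQ, algebraMap_int_eq]

lemma span_image_gcd (t : Finset (Polynomial ℤ)) :
    ∃ u : Polynomial ℤ, u ∈ Ideal.span (t : Set (Polynomial ℤ)) ∧
      Ideal.span (φQ '' (t : Set (Polynomial ℤ))) = Ideal.span {φQ u} := by
  classical
  induction t using Finset.induction_on with
  | empty =>
    exact ⟨0, Ideal.zero_mem _, by simp [Ideal.span_singleton_eq_bot.mpr]⟩
  | @insert f t hf IH =>
    obtain ⟨u, humem, huspan⟩ := IH
    have himg : (φQ '' ((insert f t : Finset (Polynomial ℤ)) : Set (Polynomial ℤ)))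
        = insert (φQ f) (φQ '' (t : Set (Polynomial ℤ))) := by
      rw [Finset.coe_insert, Set.image_insert_eq]
    have hsp : Ideal.span (φQ '' ((insert f t : Finset (Polynomial ℤ)) : Set (Polynomial ℤ)))
        = Ideal.span {φQ f, φQ u} := by
      rw [himg, Ideal.span_insert, huspan, ← Ideal.span_insert]
    set d := gcd (φQ f) (φQ u) with hd
    have hds : Ideal.span {φQ f, φQ u} = Ideal.span {d} := (span_gcd _ _).symm
    have hdmem : d ∈ Ideal.span ({φQ f, φQ u} : Set (Polynomial ℚ)) := by
      rw [hds]; exact Ideal.subset_span rfl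
    obtain ⟨A, B, hAB⟩ := Ideal.mem_span_pair.mp hdmem
    obtain ⟨c₁, a₁, hc₁, ha₁⟩ := int_normalize A
    obtain ⟨c₂, a₂, hc₂, ha₂⟩ := int_normalize B
    refine ⟨C c₂ * a₁ * f + C c₁ * a₂ * u, ?_, ?_⟩
    · refine Ideal.add_mem _ (Ideal.mul_mem_left _ _ ?_) (Ideal.mul_mem_left _ _ ?_)
      · exact Ideal.subset_span (by simp)
      · exact Ideal.span_mono (by simp) humem
    · have hφ : φQ (C c₂ * a₁ * f + C c₁ * a₂ * u) = C ((c₁ : ℚ) * c₂) * d := by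
        have h1 : φQ (C c₂) = C ((c₂ : ℚ)) := by simp [φQ]
        have h2 : φQ (C c₁) = C ((c₁ : ℚ)) := by simp [φQ]
        rw [map_add]
        rw [_root_.map_mul, _root_.map_mul, _root_.map_mul, _root_.map_mul, h1, h2, ha₁, ha₂, ← hAB, C_mul]
        ring
      rw [hsp, hds, hφ]
      rw [Ideal.span_singleton_eq_span_singleton]
      have hcu : IsUnit (C ((c₁ : ℚ) * c₂)) := by
        rw [Polynomial.isUnit_C]
        simp only [isUnit_iff_ne_zero]
        exact mul_ne_zero (by exact_mod_cast hc₁) (by exact_mod_cast hc₂)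
      have := (associated_mul_unit_left d _ hcu).symm
      rwa [mul_comm] at this

lemma exists_C_mem (I : Ideal (Polynomial ℤ)) (hI : I ≠ ⊥)
    (hP : ∀ p : Polynomial ℤ, Prime p → ¬ I ≤ Ideal.span {p}) :
    ∃ n : ℤ, n ≠ 0 ∧ C n ∈ I := by
  obtain ⟨t, ht⟩ : I.FG := IsNoetherian.noetherian I
  obtain ⟨u, humem, hspan⟩ := span_image_gcd t
  rw [ht] at humem
  have hu0 : φQ u ≠ 0 := by
    intro h0
    apply hI
    rw [← ht, Ideal.span_eq_bot]
    intro f hfmem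
    have hf : φQ f ∈ Ideal.span (φQ '' (t : Set (Polynomial ℤ))) :=
      Ideal.subset_span ⟨f, hfmem, rfl⟩
    rw [hspan, h0, Ideal.span_singleton_eq_bot.mpr rfl, Ideal.mem_bot] at hf
    exact phiQ_inj (by simpa using hf)
  by_cases hUnit : IsUnit (φQ u)
  · obtain ⟨r, hr, hCr⟩ := Polynomial.isUnit_iff.mp hUnit
    have hinj : Function.Injective (Int.castRingHom ℚ) := fun a b h => by simpa using h
    have hdeg : u.degree ≤ 0 := by
      have hmapdeg := Polynomial.degree_map_eq_of_injective hinj u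
      have : (φQ u).degree ≤ 0 := by rw [← hCr]; exact degree_C_le
      rwa [show φQ u = u.map (Int.castRingHom ℚ) from rfl, hmapdeg] at this
    refine ⟨u.coeff 0, ?_, ?_⟩
    · intro h0
      apply hu0
      have : u = 0 := by
        rw [Polynomial.eq_C_of_degree_le_zero hdeg, h0, map_zero]
      rw [this, map_zero]
    · rw [← Polynomial.eq_C_of_degree_le_zero hdeg]; exact humem
  · obtain ⟨π, hπ_irr, hπ_dvd⟩ := WfDvdMonoid.exists_irreducible_factor hUnit hu0
    exfalso
    have hπ0 : π ≠ 0 := hπ_irr.ne_zero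
    set w := IsLocalization.integerNormalization (nonZeroDivisors ℤ) π with hw
    set q := w.primPart with hqdef
    have hq_prim : q.IsPrimitive := isPrimitive_primPart _
    have hw0 : w ≠ 0 := fun h =>
      hπ0 (IsFractionRing.integerNormalization_eq_zero_iff.mp h)
    have hct : w.content ≠ 0 := fun h => hw0 (content_eq_zero_iff.mp h)
    obtain ⟨c, a, hc, hmapw⟩ : ∃ (c : ℤ) (a : Polynomial ℤ), c ≠ 0 ∧ φQ w = C (c:ℚ) * π := by
      obtain ⟨⟨c, hcmem⟩, hmap⟩ :=
        IsLocalization.integerNormalization_map_to_map (nonZeroDivisors ℤ) π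
      refine ⟨c, w, mem_nonZeroDivisors_iff_ne_zero.mp hcmem, ?_⟩
      have h2 : (c : ℤ) • π = C (c : ℚ) * π := by
        rw [← smul_eq_C_mul, ← algebraMap_smul ℚ (c : ℤ) π]
        norm_num
      rw [← h2, ← hmap]
      simp [φQ, hw, algebraMap_int_eq]
    have hkey : C ((w.content : ℚ)) * φQ q = C (c:ℚ) * π := by
      rw [← hmapw]
      have : φQ w = φQ (C w.content * q) := by rw [← eq_C_content_mul_primPart]
      rw [this, _root_.map_mul]
      congr 1
      simp [φQ]
    have hassoc : Associated (φQ q) π := by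
      have hu1 : IsUnit (C ((w.content : ℚ))) := by
        rw [Polynomial.isUnit_C]; exact isUnit_iff_ne_zero.mpr (by exact_mod_cast hct)
      have hu2 : IsUnit (C ((c : ℚ))) := by
        rw [Polynomial.isUnit_C]; exact isUnit_iff_ne_zero.mpr (by exact_mod_cast hc)
      have h1 : Associated (φQ q) (C ((w.content : ℚ)) * φQ q) := by
        have := (associated_mul_unit_left (φQ q) _ hu1).symm
        rwa [mul_comm] at this
      have h2 : Associated (C ((c:ℚ)) * π) π := by
        have := associated_mul_unit_left π _ hu2
        rwa [mul_comm] at this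
      exact (h1.trans (hkey ▸ Associated.refl _)).trans h2
    have hq_irr : Irreducible q := by
      apply (Polynomial.IsPrimitive.Int.irreducible_iff_irreducible_map_cast hq_prim).mpr
      exact hassoc.symm.irreducible hπ_irr
    have hq_prime : Prime q := UniqueFactorizationMonoid.irreducible_iff_prime.mp hq_irr
    apply hP q hq_prime
    rw [← ht, Ideal.span_le]
    intro f hfmem
    rw [SetLike.mem_coe, Ideal.mem_span_singleton]
    by_cases hf0 : f = 0
    · rw [hf0]; exact dvd_zero q
    have hπf : π ∣ φQ f := by
      have hf : φQ f ∈ Ideal.span (φQ '' (t : Set (Polynomial ℤ))) :=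
        Ideal.subset_span ⟨f, hfmem, rfl⟩
      rw [hspan, Ideal.mem_span_singleton] at hf
      exact hπ_dvd.trans hf
    have hqf : φQ q ∣ φQ (f.primPart) := by
      have h1 : φQ q ∣ φQ f := hassoc.dvd.trans hπf
      have h2 : φQ f = C ((f.content : ℚ)) * φQ f.primPart := by
        conv_lhs => rw [f.eq_C_content_mul_primPart]
        rw [_root_.map_mul]
        congr 1
        simp [φQ]
      have hu3 : IsUnit (C ((f.content : ℚ))) := by
        rw [Polynomial.isUnit_C]
        exact isUnit_iff_ne_zero.mpr
          (by exact_mod_cast (fun h => hf0 (content_eq_zero_iff.mp h) : f.content ≠ 0))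
      rw [h2] at h1
      exact (hu3.dvd_mul_left).mp h1
    have : q ∣ f.primPart :=
      (Polynomial.IsPrimitive.Int.dvd_iff_map_cast_dvd_map_cast q f.primPart hq_prim
        ).mpr hqf
    exact this.trans (f.primPart_dvd)

/-- For any ideal `J` of `ℤ[σ]` there is a principal ideal `J'` containing `J`
with `J'/J` finite. -/
theorem stmt_9 (J : Ideal (Polynomial ℤ)) :
    ∃ J' : Ideal (Polynomial ℤ), (∃ g : Polynomial ℤ, J' = Ideal.span {g}) ∧ J ≤ J' ∧
      (J.toAddSubgroup.addSubgroupOf J'.toAddSubgroup).index ≠ 0 := by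
  classical
  by_cases hJbot : J = ⊥
  · refine ⟨Ideal.span {0}, ⟨0, rfl⟩, by rw [hJbot]; exact bot_le, ?_⟩
    have hsub : Subsingleton ((Ideal.span ({0} : Set (Polynomial ℤ))).toAddSubgroup) := by
      constructor
      rintro ⟨x, hx⟩ ⟨y, hy⟩
      have hx' : x = 0 := by simpa using (Ideal.mem_span_singleton.mp hx)
      have hy' : y = 0 := by simpa using (Ideal.mem_span_singleton.mp hy)
      subst hx' hy'; rfl
    have : Finite ((Ideal.span ({0} : Set (Polynomial ℤ))).toAddSubgroup ⧸
        (J.toAddSubgroup.addSubgroupOf (Ideal.span ({0} : Set (Polynomial ℤ))).toAddSubgroup)) := by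
      have : Subsingleton ((Ideal.span ({0} : Set (Polynomial ℤ))).toAddSubgroup ⧸
        (J.toAddSubgroup.addSubgroupOf (Ideal.span ({0} : Set (Polynomial ℤ))).toAddSubgroup)) :=
        Quotient.instSubsingletonQuotient _
      exact Finite.of_subsingleton
    exact AddSubgroup.index_ne_zero_of_finite
  · obtain ⟨s, hs⟩ : J.FG := IsNoetherian.noetherian J
    set g : Polynomial ℤ := s.gcd id with hgdef
    have hgdvd : ∀ f ∈ s, g ∣ f := fun f hf => Finset.gcd_dvd hf
    have hJle : J ≤ Ideal.span {g} := by
      rw [← hs, Ideal.span_le]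
      intro f hf
      exact Ideal.mem_span_singleton.mpr (hgdvd f hf)
    have hg0 : g ≠ 0 := by
      intro h0
      apply hJbot
      rw [← hs, Ideal.span_eq_bot]
      intro f hf
      have := hgdvd f hf
      rw [h0] at this
      exact zero_dvd_iff.mp this
    set J₀ : Ideal (Polynomial ℤ) :=
      Submodule.comap (LinearMap.mulLeft (Polynomial ℤ) g) J with hJ₀def
    have hJ₀mem : ∀ x, x ∈ J₀ ↔ g * x ∈ J := fun x => Iff.rfl
    have hJ₀ne : J₀ ≠ ⊥ := by
      obtain ⟨y, hyJ, hy0⟩ := J.ne_bot_iff.mp hJbot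
      obtain ⟨x, rfl⟩ := Ideal.mem_span_singleton.mp (hJle hyJ)
      rw [Submodule.ne_bot_iff]
      exact ⟨x, (hJ₀mem x).mpr hyJ, fun h => hy0 (by rw [h, mul_zero])⟩
    have hP₀ : ∀ p : Polynomial ℤ, Prime p → ¬ J₀ ≤ Ideal.span {p} := by
      intro p hp hle
      have hdvd : g * p ∣ g := by
        apply Finset.dvd_gcd
        intro f hf
        obtain ⟨x, hx⟩ := hgdvd f hf
        have hxJ₀ : x ∈ J₀ := (hJ₀mem x).mpr (by rw [← hx]; exact hs ▸ Ideal.subset_span hf)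
        obtain ⟨y, rfl⟩ := Ideal.mem_span_singleton.mp (hle hxJ₀)
        rw [hx]
        exact mul_dvd_mul_left g (dvd_mul_right p y)
      have : p ∣ 1 := by
        have h1 : g * p ∣ g * 1 := by rwa [mul_one]
        exact (mul_dvd_mul_iff_left hg0).mp h1
      exact hp.not_unit (isUnit_of_dvd_one this)
    obtain ⟨n, hn0, hnC⟩ := exists_C_mem J₀ hJ₀ne hP₀
    have hfin : Finite (Polynomial ℤ ⧸ J₀) :=
      finite_quot_of_int_mem n.natAbs n J₀ rfl hn0 hnC hP₀
    refine ⟨Ideal.span {g}, ⟨g, rfl⟩, hJle, ?_⟩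
    set K := (Ideal.span ({g} : Set (Polynomial ℤ))).toAddSubgroup with hK
    set H := J.toAddSubgroup.addSubgroupOf K with hH
    have : Finite (K ⧸ H) := by
      set f0 : Polynomial ℤ → K ⧸ H := fun x =>
        QuotientAddGroup.mk ⟨g * x, Ideal.mem_span_singleton.mpr (dvd_mul_right g x)⟩ with hf0
      have hwd : ∀ a b : Polynomial ℤ, (Submodule.quotientRel J₀) a b → f0 a = f0 b := by
        intro a b hab
        have hab' : a - b ∈ J₀ := (Submodule.quotientRel_def J₀).mp hab
        rw [hf0]
        refine QuotientAddGroup.eq.mpr ?_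
        rw [AddSubgroup.mem_addSubgroupOf]
        show -(g * a) + g * b ∈ J.toAddSubgroup
        have heq : -(g * a) + g * b = g * (b - a) := by ring
        rw [heq]
        have hba : b - a ∈ J₀ := by
          have := J₀.neg_mem hab'
          simpa [neg_sub] using this
        exact (hJ₀mem (b - a)).mp hba
      refine Finite.of_surjective
        (fun z : Polynomial ℤ ⧸ J₀ => Quotient.liftOn' z f0 hwd) ?_
      intro z
      induction z using QuotientAddGroup.induction_on with
      | _ y =>
        obtain ⟨yv, hyv⟩ := y
        obtain ⟨x, hx⟩ := Ideal.mem_span_singleton.mp hyv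
        refine ⟨Submodule.Quotient.mk x, ?_⟩
        show f0 x = _
        rw [hf0]
        show QuotientAddGroup.mk _ = QuotientAddGroup.mk _
        congr 1
        exact Subtype.ext hx.symm
    exact AddSubgroup.index_ne_zero_of_finite
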